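/- Let R > 0, c > 0, k > 0, m > 0. Let f : [0,R] → ℝ be convex and differentiable with |f'(r)| ≤ c for all r ∈ [0,R], and assume the curvature-type bound |arctan(f'(r)) − arctan(f'(r'))| ≤ k·√(1+c²)·|r − r'| for all r, r' ∈ [0,R]. Let α : [0,1] → ℝ be differentiable with α'(t) ≥ m for all t ∈ [0,1], and let r : [0,1] → [0,R] be a function satisfying α(t) = f(r(t)) − r(t)·f'(r(t)) for all t ∈ [0,1]. Then for all 0 ≤ t₁ < t₂ ≤ 1 one has r(t₂) − r(t₁) ≤ −γ·(t₂ − t₁), where γ = m / (R·k·(1+c²)^{3/2}). -/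

import Mathlib

open Set Real

/-- On `[-c, c]` the arctan function has derivative at least `1/(1+c²)`, so its
inverse gain: `u - v ≤ (1+c²) * (arctan u - arctan v)` for `v ≤ u`. -/
lemma arctan_gain (c : ℝ) (hc : 0 < c) (u v : ℝ) (hu : |u| ≤ c) (hv : |v| ≤ c)
    (hvu : v ≤ u) : u - v ≤ (1 + c ^ 2) * (Real.arctan u - Real.arctan v) := by
  have key := Convex.mul_sub_le_image_sub_of_le_deriv (convex_Icc (-c) c)
    (f := fun x => (1 + c ^ 2) * Real.arctan x) (C := 1)
    (Continuous.continuousOn (by continuity)) ?_ ?_ v (abs_le.mp hv) u (abs_le.mp hu) hvu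
  · nlinarith [key]
  · intro x hx
    exact ((Real.hasDerivAt_arctan x).const_mul (1 + c ^ 2)).differentiableAt.differentiableWithinAt
  · intro x hx
    rw [interior_Icc] at hx
    have hd : HasDerivAt (fun x => (1 + c ^ 2) * Real.arctan x)
        ((1 + c ^ 2) * (1 / (1 + x ^ 2))) x := (Real.hasDerivAt_arctan x).const_mul (1 + c ^ 2)
    rw [hd.deriv]
    have hx2 : x ^ 2 ≤ c ^ 2 := sq_le_sq' (by linarith [hx.1]) (le_of_lt hx.2)
    have h1 : (0:ℝ) < 1 + x ^ 2 := by positivity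
    rw [mul_one_div, le_div_iff₀ h1]
    linarith

/-- Lemma 2 of the paper (single planar section): if the convex boundary curve (the
graph of `f`, with `|f'| ≤ c`) has curvature at most `k` (expressed by the Lipschitz
bound on the tangent angle `arctan (f' r)`), the vertex `α(t)` of the circumscribed
cone moves with speed `α' ≥ m`, and `r(t)` is the height of the tangency point (so
that the tangent line at `r(t)` has intercept `α(t)`), then `r` decreases at rate at
least `γ = m / (R·k·(1+c²)^{3/2})`. -/
theorem tangency_height_decreases
    (R c k m : ℝ) (hR : 0 < R) (hc : 0 < c) (hk : 0 < k) (hm : 0 < m)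
    (f f' : ℝ → ℝ)
    (hconv : ConvexOn ℝ (Icc 0 R) f)
    (hderiv : ∀ x ∈ Icc (0:ℝ) R, HasDerivWithinAt f (f' x) (Icc 0 R) x)
    (hf'c : ∀ x ∈ Icc (0:ℝ) R, |f' x| ≤ c)
    (hcurv : ∀ x ∈ Icc (0:ℝ) R, ∀ x' ∈ Icc (0:ℝ) R,
      |arctan (f' x) - arctan (f' x')| ≤ k * Real.sqrt (1 + c ^ 2) * |x - x'|)
    (α α' : ℝ → ℝ)
    (hα : ∀ t ∈ Icc (0:ℝ) 1, HasDerivWithinAt α (α' t) (Icc 0 1) t)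
    (hα'm : ∀ t ∈ Icc (0:ℝ) 1, m ≤ α' t)
    (r : ℝ → ℝ) (hrR : ∀ t ∈ Icc (0:ℝ) 1, r t ∈ Icc (0:ℝ) R)
    (htangent : ∀ t ∈ Icc (0:ℝ) 1, α t = f (r t) - r t * f' (r t)) :
    ∀ t₁ t₂ : ℝ, 0 ≤ t₁ → t₁ < t₂ → t₂ ≤ 1 →
      r t₂ - r t₁ ≤ -(m / (R * k * (1 + c ^ 2) ^ ((3:ℝ)/2))) * (t₂ - t₁) := by
  intro t₁ t₂ ht₁ h12 ht₂
  have h1c : (0:ℝ) < 1 + c ^ 2 := by positivity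
  -- L is the Lipschitz constant
  set L : ℝ := R * k * (1 + c ^ 2) ^ ((3:ℝ)/2) with hL
  have hLpos : 0 < L := by positivity
  -- rewrite L using sqrt
  have hLsqrt : L = R * k * ((1 + c ^ 2) * Real.sqrt (1 + c ^ 2)) := by
    rw [hL, Real.sqrt_eq_rpow]
    rw [show (1 + c ^ 2) * (1 + c ^ 2) ^ ((1:ℝ)/2)
        = (1 + c ^ 2) ^ ((1:ℝ)) * (1 + c ^ 2) ^ ((1:ℝ)/2) by rw [Real.rpow_one]]
    rw [← Real.rpow_add h1c]
    norm_num
  -- monotonicity of f' via slopes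
  have hf'mono : ∀ x ∈ Icc (0:ℝ) R, ∀ y ∈ Icc (0:ℝ) R, x ≤ y → f' x ≤ f' y := by
    intro x hx y hy hxy
    rcases eq_or_lt_of_le hxy with h | h
    · rw [h]
    · exact le_trans (hconv.le_slope_of_hasDerivWithinAt hx hy h (hderiv x hx))
        (hconv.slope_le_of_hasDerivWithinAt hx hy h (hderiv y hy))
  -- supporting line inequality: f y ≥ f x + f' x * (y - x)
  have hsupp : ∀ x ∈ Icc (0:ℝ) R, ∀ y ∈ Icc (0:ℝ) R, f x + f' x * (y - x) ≤ f y := by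
    intro x hx y hy
    rcases lt_trichotomy x y with h | h | h
    · have := hconv.le_slope_of_hasDerivWithinAt hx hy h (hderiv x hx)
      rw [slope_def_field] at this
      have hyx : (0:ℝ) < y - x := by linarith
      rw [le_div_iff₀ hyx] at this
      nlinarith
    · rw [h]; ring_nf; exact le_refl _
    · have := hconv.slope_le_of_hasDerivWithinAt hy hx h (hderiv x hx)
      rw [slope_def_field] at this
      have hxy : (0:ℝ) < x - y := by linarith
      rw [div_le_iff₀ hxy] at this
      nlinarith
  -- abbreviations
  have ht1m : t₁ ∈ Icc (0:ℝ) 1 := ⟨ht₁, by linarith⟩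
  have ht2m : t₂ ∈ Icc (0:ℝ) 1 := ⟨by linarith, ht₂⟩
  set a := r t₂ with haa
  set b := r t₁ with hbb
  have ha : a ∈ Icc (0:ℝ) R := hrR t₂ ht2m
  have hb : b ∈ Icc (0:ℝ) R := hrR t₁ ht1m
  -- α grows at least at rate m
  have hαgrow : m * (t₂ - t₁) ≤ α t₂ - α t₁ := by
    apply Convex.mul_sub_le_image_sub_of_le_deriv (convex_Icc (0:ℝ) 1)
      (fun t ht => (hα t ht).continuousWithinAt) ?_ ?_ t₁ ht1m t₂ ht2m (le_of_lt h12)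
    · intro x hx
      rw [interior_Icc] at hx
      have : HasDerivAt α (α' x) x :=
        (hα x (Ioo_subset_Icc_self hx)).hasDerivAt (Icc_mem_nhds hx.1 hx.2)
      exact this.differentiableAt.differentiableWithinAt
    · intro x hx
      rw [interior_Icc] at hx
      have : HasDerivAt α (α' x) x :=
        (hα x (Ioo_subset_Icc_self hx)).hasDerivAt (Icc_mem_nhds hx.1 hx.2)
      rw [this.deriv]
      exact hα'm x (Ioo_subset_Icc_self hx)
  have hm12 : 0 < m * (t₂ - t₁) := by nlinarith
  -- the intercept function value difference
  have hg : (f a - a * f' a) - (f b - b * f' b) = α t₂ - α t₁ := by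
    rw [htangent t₂ ht2m, htangent t₁ ht1m]
  -- monotonicity: a < b
  have hab : a < b := by
    by_contra hcon
    push_neg at hcon  -- b ≤ a
    have h1 := hsupp a ha b hb  -- f a + f' a * (b - a) ≤ f b
    have h2 := hf'mono b hb a ha hcon  -- f' b ≤ f' a
    -- g b - g a ≥ b * (f' a - f' b) ≥ 0, but g a - g b > 0
    have hb0 : 0 ≤ b := hb.1
    nlinarith [hg, hαgrow, hm12]
  -- Lipschitz bound: g a - g b ≤ R * (f' b - f' a)
  have hf'ab : f' a ≤ f' b := hf'mono a ha b hb (le_of_lt hab)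
  have hlip : (f a - a * f' a) - (f b - b * f' b) ≤ R * (f' b - f' a) := by
    have h1 := hsupp a ha b hb  -- f a + f' a * (b - a) ≤ f b
    have hbR : b ≤ R := hb.2
    nlinarith
  -- curvature bound: f' b - f' a ≤ (1+c²) * k * √(1+c²) * (b - a)
  have hcurv' : f' b - f' a ≤ (1 + c ^ 2) * (k * Real.sqrt (1 + c ^ 2) * (b - a)) := by
    have h1 := arctan_gain c hc (f' b) (f' a) (hf'c b hb) (hf'c a ha) hf'ab
    have h2 := hcurv b hb a ha
    rw [abs_of_nonneg (sub_nonneg.mpr (Real.arctan_strictMono.monotone hf'ab)),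
        abs_of_nonneg (sub_nonneg.mpr (le_of_lt hab))] at h2
    calc f' b - f' a ≤ (1 + c ^ 2) * (arctan (f' b) - arctan (f' a)) := h1
      _ ≤ (1 + c ^ 2) * (k * Real.sqrt (1 + c ^ 2) * (b - a)) := by
          apply mul_le_mul_of_nonneg_left h2 (le_of_lt h1c)
  -- combine: m * (t₂ - t₁) ≤ L * (b - a)
  have hmain : m * (t₂ - t₁) ≤ L * (b - a) := by
    calc m * (t₂ - t₁) ≤ α t₂ - α t₁ := hαgrow
      _ = (f a - a * f' a) - (f b - b * f' b) := hg.symm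
      _ ≤ R * (f' b - f' a) := hlip
      _ ≤ R * ((1 + c ^ 2) * (k * Real.sqrt (1 + c ^ 2) * (b - a))) :=
          mul_le_mul_of_nonneg_left hcurv' (le_of_lt hR)
      _ = L * (b - a) := by rw [hLsqrt]; ring
  -- conclude
  have hfin : m * (t₂ - t₁) / L ≤ b - a := by
    rw [div_le_iff₀ hLpos]; nlinarith [hmain]
  have heq : -(m / L) * (t₂ - t₁) = -(m * (t₂ - t₁) / L) := by ring
  rw [heq]; linarith
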